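/- arXiv:2308.03445 — 3 statements merged into one kernel-verified Lean document; each statement's English description precedes it below -/
import Mathlib

section
/- The sequences τ_n = 3·(5/3)^{-n/2}·540^{(3^n-1)/4}, σ_n = (5/3)^{n/2}·540^{(3^n-1)/4}, ρ_n = (5/3)^{3n/2}·540^{(3^n-1)/4} satisfy the system of recursions τ_{n+1} = 6τ_n²σ_n, σ_{n+1} = 7τ_nσ_n² + τ_n²ρ_n, ρ_{n+1} = 14σ_n³ + 12τ_nσ_nρ_n, with initial values τ_0 = 3, σ_0 = 1, ρ_0 = 1. -/
/-- The closed-form sequences `τ_n = 3·(5/3)^{-n/2}·540^{(3^n-1)/4}`,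
`σ_n = (5/3)^{n/2}·540^{(3^n-1)/4}`, `ρ_n = (5/3)^{3n/2}·540^{(3^n-1)/4}`
satisfy the spanning-tree/forest recursions of the Sierpiński graph with the
initial values `τ_0 = 3`, `σ_0 = 1`, `ρ_0 = 1`. -/
theorem sierpinski_tree_forest_counts
    (τ σ ρ : ℕ → ℝ)
    (hτ : ∀ n : ℕ, τ n = 3 * (5 / 3 : ℝ) ^ (-(n : ℝ) / 2) *
      (540 : ℝ) ^ (((3 : ℝ) ^ n - 1) / 4))
    (hσ : ∀ n : ℕ, σ n = (5 / 3 : ℝ) ^ ((n : ℝ) / 2) *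
      (540 : ℝ) ^ (((3 : ℝ) ^ n - 1) / 4))
    (hρ : ∀ n : ℕ, ρ n = (5 / 3 : ℝ) ^ ((3 * (n : ℝ)) / 2) *
      (540 : ℝ) ^ (((3 : ℝ) ^ n - 1) / 4)) :
    τ 0 = 3 ∧ σ 0 = 1 ∧ ρ 0 = 1 ∧
    (∀ n : ℕ, τ (n + 1) = 6 * τ n ^ 2 * σ n) ∧
    (∀ n : ℕ, σ (n + 1) = 7 * τ n * σ n ^ 2 + τ n ^ 2 * ρ n) ∧
    (∀ n : ℕ, ρ (n + 1) = 14 * σ n ^ 3 + 12 * τ n * σ n * ρ n) := by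
  have h53 : (0:ℝ) < 5/3 := by norm_num
  have h540 : (0:ℝ) < 540 := by norm_num
  set s : ℝ := (5/3 : ℝ) ^ ((1:ℝ)/2) with hs_def
  have hs_pos : 0 < s := Real.rpow_pos_of_pos h53 _
  have hs_sq : s ^ 2 = 5/3 := by
    rw [hs_def, ← Real.rpow_natCast ((5/3:ℝ) ^ ((1:ℝ)/2)) 2,
      ← Real.rpow_mul h53.le]
    norm_num
  have h540s : (540:ℝ) ^ ((1:ℝ)/2) = 18 * s := by
    rw [show (540:ℝ) = 324 * (5/3) by norm_num,
      Real.mul_rpow (by norm_num) h53.le, hs_def]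
    congr 1
    rw [show (324:ℝ) = 18 ^ (2:ℕ) by norm_num,
      ← Real.rpow_natCast (18:ℝ) 2, ← Real.rpow_mul (by norm_num : (0:ℝ) ≤ 18)]
    norm_num
  have hb : ∀ n : ℕ, (540:ℝ) ^ (((3:ℝ) ^ (n+1) - 1)/4)
      = ((540:ℝ) ^ (((3:ℝ) ^ n - 1)/4)) ^ 3 * (18 * s) := by
    intro n
    rw [← h540s, ← Real.rpow_natCast ((540:ℝ) ^ (((3:ℝ) ^ n - 1)/4)) 3,
      ← Real.rpow_mul h540.le, ← Real.rpow_add h540]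
    congr 1
    rw [pow_succ]; push_cast; ring
  have ha : ∀ n : ℕ, (5/3:ℝ) ^ ((↑(n+1):ℝ)/2) = (5/3:ℝ) ^ ((n:ℝ)/2) * s := by
    intro n
    rw [hs_def, ← Real.rpow_add h53]
    congr 1; push_cast; ring
  have han : ∀ n : ℕ, (5/3:ℝ) ^ (-(↑(n+1):ℝ)/2) = (5/3:ℝ) ^ (-(n:ℝ)/2) / s := by
    intro n
    rw [eq_div_iff hs_pos.ne', hs_def, ← Real.rpow_add h53]
    congr 1; push_cast; ring
  have ha3 : ∀ n : ℕ, (5/3:ℝ) ^ ((3 * (↑(n+1):ℝ))/2)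
      = (5/3:ℝ) ^ ((3 * (n:ℝ))/2) * s ^ 3 := by
    intro n
    rw [hs_def, ← Real.rpow_natCast ((5/3:ℝ) ^ ((1:ℝ)/2)) 3,
      ← Real.rpow_mul h53.le, ← Real.rpow_add h53]
    congr 1; push_cast; ring
  have hneg : ∀ n : ℕ, (5/3:ℝ) ^ (-(n:ℝ)/2) = ((5/3:ℝ) ^ ((n:ℝ)/2))⁻¹ := by
    intro n
    rw [neg_div, Real.rpow_neg h53.le]
  have h3n : ∀ n : ℕ, (5/3:ℝ) ^ ((3 * (n:ℝ))/2) = ((5/3:ℝ) ^ ((n:ℝ)/2)) ^ 3 := by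
    intro n
    rw [← Real.rpow_natCast ((5/3:ℝ) ^ ((n:ℝ)/2)) 3, ← Real.rpow_mul h53.le]
    congr 1; push_cast; ring
  have hapos : ∀ n : ℕ, 0 < (5/3:ℝ) ^ ((n:ℝ)/2) := fun n =>
    Real.rpow_pos_of_pos h53 _
  refine ⟨?_, ?_, ?_, ?_, ?_, ?_⟩
  · rw [hτ]; norm_num
  · rw [hσ]; norm_num
  · rw [hρ]; norm_num
  · intro n
    rw [hτ (n+1), hτ n, hσ n, hb n, han n, hneg n]
    have := (hapos n).ne'
    field_simp
    ring
  · intro n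
    rw [hσ (n+1), hτ n, hσ n, hρ n, hb n, ha n, hneg n, h3n n]
    have := (hapos n).ne'
    field_simp
    linear_combination (18 : ℝ) * hs_sq
  · intro n
    rw [hρ (n+1), hτ n, hσ n, hρ n, hb n, ha3 n, hneg n, h3n n]
    have := (hapos n).ne'
    field_simp
    linear_combination (18 * (s ^ 2 + 5/3)) * hs_sq
end

section
/- If sequences τ_n, σ_n, ρ_n of positive reals satisfy τ_0 = 3, σ_0 = 1, ρ_0 = 1 and the recursions τ_{n+1} = 6τ_n²σ_n, σ_{n+1} = 7τ_nσ_n² + τ_n²ρ_n, ρ_{n+1} = 14σ_n³ + 12τ_nσ_nρ_n, then for all n, τ_n/σ_n = 3·(3/5)^n and ρ_n/σ_n = (5/3)^n. -/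
/-- If positive sequences `τ, σ, ρ` satisfy the Sierpiński spanning tree/forest
recursions with `τ 0 = 3`, `σ 0 = 1`, `ρ 0 = 1`, then `τ n / σ n = 3·(3/5)^n`
and `ρ n / σ n = (5/3)^n`. -/
theorem sierpinski_tree_forest_ratios
    (τ σ ρ : ℕ → ℝ)
    (hτpos : ∀ n, 0 < τ n) (hσpos : ∀ n, 0 < σ n) (hρpos : ∀ n, 0 < ρ n)
    (hτ0 : τ 0 = 3) (hσ0 : σ 0 = 1) (hρ0 : ρ 0 = 1)
    (hτ : ∀ n, τ (n + 1) = 6 * τ n ^ 2 * σ n)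
    (hσ : ∀ n, σ (n + 1) = 7 * τ n * σ n ^ 2 + τ n ^ 2 * ρ n)
    (hρ : ∀ n, ρ (n + 1) = 14 * σ n ^ 3 + 12 * τ n * σ n * ρ n) :
    ∀ n : ℕ, τ n / σ n = 3 * (3 / 5 : ℝ) ^ n ∧ ρ n / σ n = (5 / 3 : ℝ) ^ n := by
  intro n
  induction n with
  | zero => simp [hτ0, hσ0, hρ0]
  | succ n ih =>
    obtain ⟨h1, h2⟩ := ih
    have hσn : (σ n) ≠ 0 := (hσpos n).ne'
    have hτeq : τ n = 3 * (3/5 : ℝ)^n * σ n := (div_eq_iff hσn).mp h1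
    have hρeq : ρ n = (5/3 : ℝ)^n * σ n := (div_eq_iff hσn).mp h2
    have hab : ((3:ℝ)/5)^n * ((5:ℝ)/3)^n = 1 := by
      rw [← mul_pow]; norm_num
    have hσeq : σ (n+1) = 30 * (3/5 : ℝ)^n * σ n ^ 3 := by
      rw [hσ n, hτeq, hρeq]; linear_combination (9*(3/5:ℝ)^n*σ n^3) * hab
    have hσ1 : σ (n+1) ≠ 0 := (hσpos (n+1)).ne'
    constructor
    · rw [hτ n, hτeq, hσeq]
      field_simp
      ring
    · rw [hρ n, hτeq, hρeq, hσeq]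
      have h50 : 14 * σ n ^ 3 + 12 * (3 * (3/5 : ℝ)^n * σ n) * σ n * ((5/3 : ℝ)^n * σ n) = 50 * σ n ^ 3 := by
        linear_combination (36*σ n^3) * hab
      rw [h50]
      rw [div_eq_iff (by positivity)]
      have h53 : ((5:ℝ)/3)^(n+1) * ((3:ℝ)/5)^n = 5/3 := by
        linear_combination ((5:ℝ)/3) * hab
      linear_combination (30*σ n^3) * h53 - (100*σ n^3) * hab
end

section
/- With the recursion of the previous context, for all n: η̄₂(n,0) = (33/28)(3/5)^n - (5/28)(1/25)^n, η̄₂(n,1) = (39/28)(3/5)^n - (29/18)(2/5)^n + (55/252)(1/25)^n, and η̄₂(n,2) = 1 - (18/7)(3/5)^n + (29/18)(2/5)^n - (5/126)(1/25)^n. -/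
/-- Closed form for the root probabilities `η̄₂` (here `η₂b`). -/
theorem root_probabilities_eta2bar
    (η₂ η₂b η₃ : ℕ → ℕ → ℚ)
    (h₂0 : η₂ 0 0 = 0 ∧ η₂ 0 1 = 1 ∧ η₂ 0 2 = 0)
    (h₂b0 : η₂b 0 0 = 1 ∧ η₂b 0 1 = 0 ∧ η₂b 0 2 = 0)
    (h₃0 : η₃ 0 0 = 1 ∧ η₃ 0 1 = 0 ∧ η₃ 0 2 = 0)
    (hrec₂ : ∀ n k, η₂ (n + 1) k =
      12 / 30 * η₂ n k + 18 / 30 * (if k = 2 then 1 else 0))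
    (hrec₂b : ∀ n k, η₂b (n + 1) k =
      6 / 30 * η₂ n k + 12 / 30 * η₂b n k + 9 / 30 * η₃ n k +
        3 / 30 * (if k = 2 then 1 else 0))
    (hrec₃ : ∀ n k, η₃ (n + 1) k =
      14 / 50 * η₂ n k + 12 / 50 * η₂b n k + 12 / 50 * η₃ n k +
        12 / 50 * (if k = 2 then 1 else 0)) :
    ∀ n : ℕ,
      η₂b n 0 = 33 / 28 * (3 / 5 : ℚ) ^ n - 5 / 28 * (1 / 25 : ℚ) ^ n ∧
      η₂b n 1 = 39 / 28 * (3 / 5 : ℚ) ^ n - 29 / 18 * (2 / 5 : ℚ) ^ n +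
        55 / 252 * (1 / 25 : ℚ) ^ n ∧
      η₂b n 2 = 1 - 18 / 7 * (3 / 5 : ℚ) ^ n + 29 / 18 * (2 / 5 : ℚ) ^ n -
        5 / 126 * (1 / 25 : ℚ) ^ n := by
  have key : ∀ n : ℕ,
      η₂ n 0 = 0 ∧ η₂ n 1 = (2/5 : ℚ) ^ n ∧ η₂ n 2 = 1 - (2/5 : ℚ) ^ n ∧
      η₂b n 0 = 33 / 28 * (3 / 5 : ℚ) ^ n - 5 / 28 * (1 / 25 : ℚ) ^ n ∧
      η₂b n 1 = 39 / 28 * (3 / 5 : ℚ) ^ n - 29 / 18 * (2 / 5 : ℚ) ^ n +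
        55 / 252 * (1 / 25 : ℚ) ^ n ∧
      η₂b n 2 = 1 - 18 / 7 * (3 / 5 : ℚ) ^ n + 29 / 18 * (2 / 5 : ℚ) ^ n -
        5 / 126 * (1 / 25 : ℚ) ^ n ∧
      η₃ n 0 = 11 / 14 * (3 / 5 : ℚ) ^ n + 3 / 14 * (1 / 25 : ℚ) ^ n ∧
      η₃ n 1 = 13 / 14 * (3 / 5 : ℚ) ^ n - 2 / 3 * (2 / 5 : ℚ) ^ n -
        11 / 42 * (1 / 25 : ℚ) ^ n ∧
      η₃ n 2 = 1 - 12 / 7 * (3 / 5 : ℚ) ^ n + 2 / 3 * (2 / 5 : ℚ) ^ n +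
        1 / 21 * (1 / 25 : ℚ) ^ n := by
    intro n
    induction n with
    | zero =>
      obtain ⟨a0, a1, a2⟩ := h₂0
      obtain ⟨b0, b1, b2⟩ := h₂b0
      obtain ⟨c0, c1, c2⟩ := h₃0
      norm_num [a0, a1, a2, b0, b1, b2, c0, c1, c2]
    | succ n ih =>
      obtain ⟨a0, a1, a2, b0, b1, b2, c0, c1, c2⟩ := ih
      refine ⟨?_, ?_, ?_, ?_, ?_, ?_, ?_, ?_, ?_⟩ <;>
        simp only [hrec₂, hrec₂b, hrec₃, a0, a1, a2, b0, b1, b2, c0, c1, c2,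
          pow_succ] <;> norm_num <;> ring
  exact fun n => ⟨(key n).2.2.2.1, (key n).2.2.2.2.1, (key n).2.2.2.2.2.1⟩
end
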